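/- Consider one LALM iteration from (x^k, y^k, z^k) with z^k ≥ 0 componentwise and step sizes η^k, ρ_y, ρ_z > 0, under Assumption (Lip) with dom(h) = ℝ^p. Then for every x with Ax = b and f_j(x) ≤ 0 for all j, every y ∈ ℝ^q, and every z ≥ 0 componentwise: Φ(x^{k+1}; x, y, z) + (η^k/2)‖x^{k+1} − x‖² + (1/(2ρ_y))‖y^{k+1} − y‖² + (1/(2ρ_z))‖z^{k+1} − z‖² + ((β − ρ_y)/2)‖r^{k+1}‖² + ((β − ρ_z)/(2ρ_z²))‖z^{k+1} − z^k‖² + (1/2)(x^{k+1} − x^k)ᵀ[(η^k − L_g − L_Ψ(x^k,z^k))I − βAᵀA](x^{k+1} − x^k) ≤ (η^k/2)‖x^k − x‖² − (β/2)‖r^k‖² + (1/(2ρ_y))‖y^k − y‖² + (1/(2ρ_z))‖z^k − z‖². -/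

import Mathlib

open scoped RealInnerProductSpace

noncomputable section

/-- The function `ψ_β(u,v)` used in the classic augmented Lagrangian. -/
def psi (β u v : ℝ) : ℝ :=
  if 0 ≤ β * u + v then u * v + β / 2 * u ^ 2 else -(v ^ 2) / (2 * β)

/-- `Ψ_β(x,z) = ∑_j ψ_β(f_j(x), z_j)`. -/
def PsiAug {p m : ℕ} (β : ℝ) (f : Fin m → EuclideanSpace ℝ (Fin p) → ℝ)
    (x : EuclideanSpace ℝ (Fin p)) (z : EuclideanSpace ℝ (Fin m)) : ℝ :=
  ∑ j, psi β (f j x) (z j)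

/-- `∇_x F_β(x,y,z)`, the `x`-gradient of the smooth part of the augmented Lagrangian. -/
def gradFx {p q m : ℕ} (β : ℝ) (f : Fin m → EuclideanSpace ℝ (Fin p) → ℝ)
    (g' : EuclideanSpace ℝ (Fin p) → EuclideanSpace ℝ (Fin p))
    (f' : Fin m → EuclideanSpace ℝ (Fin p) → EuclideanSpace ℝ (Fin p))
    (A : EuclideanSpace ℝ (Fin p) →L[ℝ] EuclideanSpace ℝ (Fin q))
    (b : EuclideanSpace ℝ (Fin q))
    (x : EuclideanSpace ℝ (Fin p)) (y : EuclideanSpace ℝ (Fin q))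
    (z : EuclideanSpace ℝ (Fin m)) : EuclideanSpace ℝ (Fin p) :=
  g' x + (ContinuousLinearMap.adjoint A) (y + β • (A x - b))
    + ∑ j, max (β * f j x + z j) 0 • f' j x

section AuxVec

variable {E : Type*} [NormedAddCommGroup E] [InnerProductSpace ℝ E] [CompleteSpace E]

lemma lalm_hasDerivAt_path {f : E → ℝ} {f' : E → E} (hf : ∀ z, HasGradientAt f (f' z) z)
    (x v : E) (t : ℝ) :
    HasDerivAt (fun s : ℝ => f (x + s • v)) ⟪f' (x + t • v), v⟫ t := by
  have hc : HasDerivAt (fun s : ℝ => x + s • v) v t := by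
    simpa using ((hasDerivAt_id t).smul_const v).const_add x
  have hF := (hf (x + t • v)).hasFDerivAt
  have := hF.comp_hasDerivAt t hc
  simpa [InnerProductSpace.toDual_apply_apply, Function.comp_def] using this

lemma lalm_grad_convex_le {f : E → ℝ} {f' : E → E} (hconv : ConvexOn ℝ Set.univ f)
    (hf : ∀ z, HasGradientAt f (f' z) z) (x y : E) :
    f x + ⟪f' x, y - x⟫ ≤ f y := by
  set q : ℝ → ℝ := fun s => f (x + s • (y - x)) with hq
  have hq0 : HasDerivAt q ⟪f' x, y - x⟫ 0 := by
    simpa using lalm_hasDerivAt_path hf x (y - x) 0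
  have hslope : Filter.Tendsto (slope q 0) (nhdsWithin 0 (Set.Ioi (0:ℝ)))
      (nhds ⟪f' x, y - x⟫) := by
    have := hasDerivAt_iff_tendsto_slope.mp hq0
    exact this.mono_left (nhdsWithin_mono _ (fun t ht => ne_of_gt ht))
  have hub : ∀ᶠ t in nhdsWithin 0 (Set.Ioi (0:ℝ)), slope q 0 t ≤ f y - f x := by
    filter_upwards [Ioc_mem_nhdsGT_of_mem (by norm_num : (0:ℝ) ∈ Set.Ico 0 1)] with t ht
    obtain ⟨ht0, ht1⟩ := ht
    have hxt : x + t • (y - x) = (1 - t) • x + t • y := by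
      rw [smul_sub, sub_smul, one_smul]; abel
    have hc := hconv.2 (Set.mem_univ x) (Set.mem_univ y)
      (by linarith : (0:ℝ) ≤ 1 - t) (le_of_lt ht0) (by ring)
    have hqt : q t ≤ (1 - t) * f x + t * f y := by
      rw [hq]; simp only [hxt]; simpa [smul_eq_mul] using hc
    have hq00 : q 0 = f x := by simp [hq]
    rw [slope_def_field, sub_zero, div_le_iff₀ ht0]
    nlinarith [hqt, hq00]
  have := le_of_tendsto hslope hub
  linarith

lemma lalm_grad_lip {f : E → ℝ} {f' : E → E} {Bc : ℝ} (hf : ∀ z, HasGradientAt f (f' z) z)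
    (hB : ∀ a, ‖f' a‖ ≤ Bc) (x y : E) : |f y - f x| ≤ Bc * ‖y - x‖ := by
  have := Convex.norm_image_sub_le_of_norm_hasFDerivWithin_le
    (f' := fun a => InnerProductSpace.toDual ℝ E (f' a))
    (fun a _ => ((hf a).hasFDerivAt).hasFDerivWithinAt) (C := Bc)
    (fun a _ => by simpa using hB a) convex_univ (Set.mem_univ x) (Set.mem_univ y)
  simpa [Real.norm_eq_abs] using this

lemma lalm_grad_descent {f : E → ℝ} {f' : E → E} {Lc : ℝ} (hf : ∀ z, HasGradientAt f (f' z) z)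
    (hL : ∀ a b, ‖f' a - f' b‖ ≤ Lc * ‖a - b‖) (x y : E) :
    f y ≤ f x + ⟪f' x, y - x⟫ + Lc / 2 * ‖y - x‖ ^ 2 := by
  set v := y - x with hv
  set φ : ℝ → ℝ := fun t => f (x + t • v) - t * ⟪f' x, v⟫ - Lc / 2 * t ^ 2 * ‖v‖ ^ 2 with hφ
  have hd : ∀ t : ℝ, HasDerivAt φ
      (⟪f' (x + t • v), v⟫ - ⟪f' x, v⟫ - Lc * t * ‖v‖ ^ 2) t := by
    intro t
    have h1 := lalm_hasDerivAt_path hf x v t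
    have h2 : HasDerivAt (fun s : ℝ => s * ⟪f' x, v⟫) ⟪f' x, v⟫ t := by
      simpa using (hasDerivAt_id t).mul_const (⟪f' x, v⟫)
    have h3 : HasDerivAt (fun s : ℝ => Lc / 2 * s ^ 2 * ‖v‖ ^ 2) (Lc * t * ‖v‖ ^ 2) t := by
      have h4 := ((hasDerivAt_pow 2 t).const_mul (Lc / 2)).mul_const (‖v‖ ^ 2)
      exact h4.congr_deriv (by push_cast; ring)
    exact (h1.sub h2).sub h3
  have hder : ∀ t ∈ Set.Icc (0:ℝ) 1, t ∈ interior (Set.Icc (0:ℝ) 1) →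
      deriv φ t ≤ 0 := by
    intro t _ hti
    rw [interior_Icc, Set.mem_Ioo] at hti
    rw [(hd t).deriv]
    have hb : ⟪f' (x + t • v) - f' x, v⟫ ≤ Lc * t * ‖v‖ ^ 2 := by
      calc ⟪f' (x + t • v) - f' x, v⟫ ≤ ‖f' (x + t • v) - f' x‖ * ‖v‖ :=
            real_inner_le_norm _ _
        _ ≤ (Lc * ‖x + t • v - x‖) * ‖v‖ := by
            have := hL (x + t • v) x
            exact mul_le_mul_of_nonneg_right this (norm_nonneg _)
        _ = Lc * t * ‖v‖ ^ 2 := by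
            rw [add_sub_cancel_left, norm_smul, Real.norm_eq_abs,
              abs_of_pos hti.1]; ring
    rw [inner_sub_left] at hb
    linarith
  have hmono : AntitoneOn φ (Set.Icc (0:ℝ) 1) := by
    apply antitoneOn_of_deriv_nonpos (convex_Icc 0 1)
    · exact fun t _ => ((hd t).differentiableAt).continuousAt.continuousWithinAt
    · intro t ht
      rw [interior_Icc] at ht
      exact ((hd t).differentiableAt).differentiableWithinAt
    · intro t ht
      rw [interior_Icc] at ht
      exact hder t (Set.mem_Icc.mpr ⟨le_of_lt ht.1, le_of_lt ht.2⟩)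
        (by rw [interior_Icc]; exact ht)
  have hfin := hmono (Set.left_mem_Icc.mpr zero_le_one)
    (Set.right_mem_Icc.mpr zero_le_one) zero_le_one
  have hφ0 : φ 0 = f x := by simp [hφ]
  have hφ1 : φ 1 = f y - ⟪f' x, v⟫ - Lc / 2 * ‖v‖ ^ 2 := by
    simp only [hφ, one_smul, one_pow, one_mul, hv, add_sub_cancel, mul_one]
  rw [hφ0, hφ1] at hfin
  linarith

lemma lalm_limit_aux {c K : ℝ} (hK : 0 ≤ K) (h : ∀ t : ℝ, 0 < t → t ≤ 1 → 0 ≤ c + K * t) :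
    0 ≤ c := by
  by_contra hc
  push_neg at hc
  have hKp : 0 < K + 1 := by linarith
  set t := min 1 (-c / (K + 1)) with ht
  have hcpos : 0 < -c := by linarith
  have ht0 : 0 < t := lt_min one_pos (div_pos hcpos hKp)
  have ht1 : t ≤ 1 := min_le_left _ _
  have ht2 : t ≤ -c / (K + 1) := min_le_right _ _
  have := h t ht0 ht1
  have hKt : K * t ≤ K * (-c / (K + 1)) := mul_le_mul_of_nonneg_left ht2 hK
  have : K * (-c / (K + 1)) < -c := by
    rw [mul_div_assoc', div_lt_iff₀ hKp]
    nlinarith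
  linarith

lemma lalm_prox_opt {h : E → ℝ} (hh : ConvexOn ℝ Set.univ h) {G xk xk1 : E} {ηk : ℝ}
    (hηk : 0 ≤ ηk)
    (hmin : ∀ x, h xk1 + ⟪G, xk1⟫ + ηk / 2 * ‖xk1 - xk‖ ^ 2
      ≤ h x + ⟪G, x⟫ + ηk / 2 * ‖x - xk‖ ^ 2) (x : E) :
    h xk1 + ⟪G, xk1⟫ + ηk * ⟪xk1 - xk, xk1 - x⟫ ≤ h x + ⟪G, x⟫ := by
  set w := x - xk1 with hw
  set Δ := xk1 - xk with hΔ
  set c := h x + ⟪G, x⟫ - h xk1 - ⟪G, xk1⟫ - ηk * ⟪Δ, xk1 - x⟫ with hc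
  have hcK : 0 ≤ c := by
    apply lalm_limit_aux (K := ηk / 2 * ‖w‖ ^ 2)
    · exact mul_nonneg (by linarith) (sq_nonneg _)
    intro t ht0 ht1
    set xt := xk1 + t • w with hxt
    have hmin' := hmin xt
    have hcv : h xt ≤ (1 - t) * h xk1 + t * h x := by
      have hxt2 : xk1 + t • w = (1 - t) • xk1 + t • x := by
        rw [hw, smul_sub, sub_smul, one_smul]; abel
      have := hh.2 (Set.mem_univ xk1) (Set.mem_univ x)
        (by linarith : (0:ℝ) ≤ 1 - t) (le_of_lt ht0) (by ring)
      rw [hxt, hxt2]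
      simpa [smul_eq_mul] using this
    have hip : ⟪G, xt⟫ = ⟪G, xk1⟫ + t * ⟪G, w⟫ := by
      rw [hxt, inner_add_right, real_inner_smul_right]
    have hnr : ‖xt - xk‖ ^ 2 = ‖Δ‖ ^ 2 + 2 * (t * ⟪Δ, w⟫) + t ^ 2 * ‖w‖ ^ 2 := by
      have hv : xt - xk = Δ + t • w := by rw [hxt, hΔ]; abel
      rw [hv, norm_add_sq_real, real_inner_smul_right, norm_smul, Real.norm_eq_abs,
        mul_pow, sq_abs]
    have hGw : ⟪G, w⟫ = ⟪G, x⟫ - ⟪G, xk1⟫ := by rw [hw, inner_sub_right]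
    have hΔw : ⟪Δ, w⟫ = -⟪Δ, xk1 - x⟫ := by
      rw [hw, show x - xk1 = -(xk1 - x) by abel, inner_neg_right]
    have h0 : 0 ≤ t * (c + ηk / 2 * ‖w‖ ^ 2 * t) := by
      have hexp : t * (c + ηk / 2 * ‖w‖ ^ 2 * t) =
          (h xt + ⟪G, xt⟫ + ηk / 2 * ‖xt - xk‖ ^ 2)
          - (h xk1 + ⟪G, xk1⟫ + ηk / 2 * ‖Δ‖ ^ 2)
          + (((1 - t) * h xk1 + t * h x) - h xt) := by
        rw [hip, hnr, hc, hGw, hΔw]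
        ring
      rw [hexp]
      linarith
    by_contra hneg
    push_neg at hneg
    have : t * (c + ηk / 2 * ‖w‖ ^ 2 * t) < 0 :=
      mul_neg_of_pos_of_neg ht0 (by linarith)
    linarith
  rw [hc] at hcK
  linarith

end AuxVec

section AuxScalar

lemma lalm_psi_eq {β : ℝ} (hβ : 0 < β) (u v : ℝ) :
    psi β u v = ((max (β * u + v) 0) ^ 2 - v ^ 2) / (2 * β) := by
  unfold psi
  split_ifs with h
  · rw [max_eq_left h]; field_simp; ring
  · rw [max_eq_right (le_of_lt (lt_of_not_ge h))]; ring_nf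

lemma lalm_max_sq_key1 (a b : ℝ) :
    (max b 0) ^ 2 ≤ (max a 0) ^ 2 + 2 * max a 0 * (b - a) + (b - a) ^ 2 := by
  rcases le_total a 0 with ha | ha <;> rcases le_total b 0 with hb | hb
  · rw [max_eq_right ha, max_eq_right hb]; nlinarith
  · rw [max_eq_right ha, max_eq_left hb]; nlinarith
  · rw [max_eq_left ha, max_eq_right hb]; nlinarith [sq_nonneg b]
  · rw [max_eq_left ha, max_eq_left hb]; nlinarith

lemma lalm_max_sq_key2 (a b : ℝ) :
    (max a 0) ^ 2 + 2 * max a 0 * (b - a) ≤ (max b 0) ^ 2 := by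
  rcases le_total a 0 with ha | ha <;> rcases le_total b 0 with hb | hb
  · rw [max_eq_right ha, max_eq_right hb]; nlinarith
  · rw [max_eq_right ha, max_eq_left hb]; nlinarith
  · rw [max_eq_left ha, max_eq_right hb]; nlinarith
  · rw [max_eq_left ha, max_eq_left hb]; nlinarith [sq_nonneg (a - b)]

lemma lalm_psi_descent {β : ℝ} (hβ : 0 < β) (u0 u1 v : ℝ) :
    psi β u1 v ≤ psi β u0 v + max (β * u0 + v) 0 * (u1 - u0) + β / 2 * (u1 - u0) ^ 2 := by
  rw [lalm_psi_eq hβ, lalm_psi_eq hβ]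
  have key := lalm_max_sq_key1 (β * u0 + v) (β * u1 + v)
  rw [div_add' _ _ _ (by positivity), div_add' _ _ _ (by positivity),
    div_le_div_iff₀ (by positivity) (by positivity)]
  nlinarith [key, sq_nonneg (u1 - u0), hβ]

lemma lalm_psi_conv {β : ℝ} (hβ : 0 < β) (u0 u1 v : ℝ) :
    psi β u0 v + max (β * u0 + v) 0 * (u1 - u0) ≤ psi β u1 v := by
  rw [lalm_psi_eq hβ, lalm_psi_eq hβ]
  have key := lalm_max_sq_key2 (β * u0 + v) (β * u1 + v)
  rw [div_add' _ _ _ (by positivity), div_le_div_iff₀ (by positivity) (by positivity)]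
  nlinarith [key, hβ]

lemma lalm_psi_nonpos {β : ℝ} (hβ : 0 < β) {u v : ℝ} (hu : u ≤ 0) (hv : 0 ≤ v) :
    psi β u v ≤ 0 := by
  unfold psi
  split_ifs with h
  · nlinarith
  · exact div_nonpos_of_nonpos_of_nonneg (by nlinarith [sq_nonneg v]) (by positivity)

lemma lalm_psi_smax {β : ℝ} (hβ : 0 < β) (u v : ℝ) :
    psi β u v = v * max (-v / β) u + β / 2 * (max (-v / β) u) ^ 2 := by
  unfold psi
  split_ifs with h
  · rw [max_eq_right (by rw [div_le_iff₀ hβ]; linarith)]; ring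
  · rw [max_eq_left (by rw [le_div_iff₀ hβ]; nlinarith [lt_of_not_ge h])]
    field_simp
    ring

lemma lalm_zcomp {β ρz v z u : ℝ} (hβ : 0 < β) (hρz : 0 < ρz) (hv : 0 ≤ v) (hz : 0 ≤ z) :
    z * u - (v * max (-v / β) u + β / 2 * (max (-v / β) u) ^ 2)
      + 1 / (2 * ρz) * ((v + ρz * max (-v / β) u - z) ^ 2 - (v - z) ^ 2)
      + (β - ρz) / (2 * ρz ^ 2) * (ρz * max (-v / β) u) ^ 2 ≤ 0 := by
  set s := max (-v / β) u with hs
  have hus : u ≤ s := le_max_right _ _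
  have key : z * u - (v * s + β / 2 * s ^ 2)
      + 1 / (2 * ρz) * ((v + ρz * s - z) ^ 2 - (v - z) ^ 2)
      + (β - ρz) / (2 * ρz ^ 2) * (ρz * s) ^ 2 = z * (u - s) := by
    field_simp
    ring
  rw [key]
  exact mul_nonpos_of_nonneg_of_nonpos hz (by linarith)

lemma lalm_enorm_sq {n : ℕ} (w : EuclideanSpace ℝ (Fin n)) : ‖w‖ ^ 2 = ∑ j, (w j) ^ 2 := by
  rw [EuclideanSpace.norm_eq, Real.sq_sqrt (Finset.sum_nonneg fun _ _ => sq_nonneg _)]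
  simp [Real.norm_eq_abs, sq_abs]

end AuxScalar

set_option maxHeartbeats 1000000 in
/-- Theorem: one-iteration progress of LALM. -/
theorem stmt8 {p q m : ℕ}
    (β ρy ρz ηk Lg : ℝ) (L B : Fin m → ℝ)
    (hβ : 0 < β) (hρy : 0 < ρy) (hρz : 0 < ρz) (hηk : 0 < ηk)
    (g h : EuclideanSpace ℝ (Fin p) → ℝ)
    (f : Fin m → EuclideanSpace ℝ (Fin p) → ℝ)
    (g' : EuclideanSpace ℝ (Fin p) → EuclideanSpace ℝ (Fin p))
    (f' : Fin m → EuclideanSpace ℝ (Fin p) → EuclideanSpace ℝ (Fin p))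
    (A : EuclideanSpace ℝ (Fin p) →L[ℝ] EuclideanSpace ℝ (Fin q))
    (b : EuclideanSpace ℝ (Fin q))
    (hgconv : ConvexOn ℝ Set.univ g) (hhconv : ConvexOn ℝ Set.univ h)
    (hfconv : ∀ j, ConvexOn ℝ Set.univ (f j))
    (hg : ∀ x, HasGradientAt g (g' x) x)
    (hf : ∀ j x, HasGradientAt (f j) (f' j x) x)
    -- Assumption (Lip) with `dom(h) = ℝ^p`
    (hLg : ∀ xh xt, ‖g' xh - g' xt‖ ≤ Lg * ‖xh - xt‖)
    (hLf : ∀ j xh xt, ‖f' j xh - f' j xt‖ ≤ L j * ‖xh - xt‖)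
    (hBf : ∀ j x, ‖f' j x‖ ≤ B j)
    -- one LALM iteration from `(x^k, y^k, z^k)`
    (xk xk1 : EuclideanSpace ℝ (Fin p)) (yk yk1 : EuclideanSpace ℝ (Fin q))
    (zk zk1 : EuclideanSpace ℝ (Fin m))
    (hzk : ∀ j, 0 ≤ zk j)
    (hxmin : ∀ x : EuclideanSpace ℝ (Fin p),
      h xk1 + ⟪gradFx β f g' f' A b xk yk zk, xk1⟫ + ηk / 2 * ‖xk1 - xk‖ ^ 2
        ≤ h x + ⟪gradFx β f g' f' A b xk yk zk, x⟫ + ηk / 2 * ‖x - xk‖ ^ 2)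
    (hy : yk1 = yk + ρy • (A xk1 - b))
    (hz : ∀ j, zk1 j = zk j + ρz * max (-(zk j) / β) (f j xk1)) :
    -- conclusion: for feasible `x`, any `y` and any `z ≥ 0`
    ∀ (x : EuclideanSpace ℝ (Fin p)) (y : EuclideanSpace ℝ (Fin q))
      (z : EuclideanSpace ℝ (Fin m)), A x = b → (∀ j, f j x ≤ 0) → (∀ j, 0 ≤ z j) →
      ((g xk1 + h xk1) - (g x + h x) + ⟪y, A xk1 - b⟫ + ∑ j, z j * f j xk1)
        + ηk / 2 * ‖xk1 - x‖ ^ 2 + 1 / (2 * ρy) * ‖yk1 - y‖ ^ 2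
        + 1 / (2 * ρz) * ‖zk1 - z‖ ^ 2
        + (β - ρy) / 2 * ‖A xk1 - b‖ ^ 2 + (β - ρz) / (2 * ρz ^ 2) * ‖zk1 - zk‖ ^ 2
        + 1 / 2 * ((ηk - Lg - ∑ j, (β * (B j) ^ 2 + L j * max (β * f j xk + zk j) 0))
              * ‖xk1 - xk‖ ^ 2 - β * ‖A (xk1 - xk)‖ ^ 2)
      ≤ ηk / 2 * ‖xk - x‖ ^ 2 - β / 2 * ‖A xk - b‖ ^ 2
        + 1 / (2 * ρy) * ‖yk - y‖ ^ 2 + 1 / (2 * ρz) * ‖zk - z‖ ^ 2 := by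
  intro x y z hAx hfx hz0
  -- gradient inner product expansion
  have Ghelp : ∀ d : EuclideanSpace ℝ (Fin p),
      ⟪gradFx β f g' f' A b xk yk zk, d⟫ = ⟪g' xk, d⟫ + ⟪yk, A d⟫
        + β * ⟪A xk - b, A d⟫ + ∑ j, max (β * f j xk + zk j) 0 * ⟪f' j xk, d⟫ := by
    intro d
    simp only [gradFx]
    rw [inner_add_left, inner_add_left, ContinuousLinearMap.adjoint_inner_left,
      inner_add_left, real_inner_smul_left, sum_inner]
    simp_rw [real_inner_smul_left]
    ring
  -- basic vector identities
  have hAx2 : A (x - xk) = -(A xk - b) := by rw [map_sub, hAx]; abel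
  have hr1 : A xk1 - b = (A xk - b) + A (xk1 - xk) := by rw [map_sub]; abel
  -- scalar expansions
  have G1 : ⟪gradFx β f g' f' A b xk yk zk, xk1 - xk⟫
      = ⟪g' xk, xk1 - xk⟫ + ⟪yk, A (xk1 - xk)⟫ + β * ⟪A xk - b, A (xk1 - xk)⟫
        + ∑ j, max (β * f j xk + zk j) 0 * ⟪f' j xk, xk1 - xk⟫ := Ghelp _
  have G2 : ⟪gradFx β f g' f' A b xk yk zk, x - xk⟫
      = ⟪g' xk, x - xk⟫ - ⟪yk, A xk - b⟫ - β * ‖A xk - b‖ ^ 2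
        + ∑ j, max (β * f j xk + zk j) 0 * ⟪f' j xk, x - xk⟫ := by
    rw [Ghelp (x - xk), hAx2, inner_neg_right, inner_neg_right,
      real_inner_self_eq_norm_sq]
    ring
  have I6a : ⟪gradFx β f g' f' A b xk yk zk, xk1⟫
      = ⟪gradFx β f g' f' A b xk yk zk, xk⟫
        + ⟪gradFx β f g' f' A b xk yk zk, xk1 - xk⟫ := by
    rw [inner_sub_right]; ring
  have I6b : ⟪gradFx β f g' f' A b xk yk zk, x⟫
      = ⟪gradFx β f g' f' A b xk yk zk, xk⟫
        + ⟪gradFx β f g' f' A b xk yk zk, x - xk⟫ := by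
    rw [inner_sub_right]; ring
  have E1 : β / 2 * ‖A xk1 - b‖ ^ 2 = β / 2 * ‖A xk - b‖ ^ 2
      + β * ⟪A xk - b, A (xk1 - xk)⟫ + β / 2 * ‖A (xk1 - xk)‖ ^ 2 := by
    rw [hr1, norm_add_sq_real]; ring
  have E2 : ⟪yk, A xk1 - b⟫ = ⟪yk, A xk - b⟫ + ⟪yk, A (xk1 - xk)⟫ := by
    rw [hr1, inner_add_right]
  have E3 : ηk / 2 * ‖xk1 - x‖ ^ 2 = ηk / 2 * ‖xk1 - xk‖ ^ 2
      + ηk * ⟪xk1 - xk, xk - x⟫ + ηk / 2 * ‖xk - x‖ ^ 2 := by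
    rw [show xk1 - x = (xk1 - xk) + (xk - x) by abel, norm_add_sq_real]; ring
  have E4 : ηk * ⟪xk1 - xk, xk1 - x⟫ = ηk * ‖xk1 - xk‖ ^ 2
      + ηk * ⟪xk1 - xk, xk - x⟫ := by
    rw [show xk1 - x = (xk1 - xk) + (xk - x) by abel, inner_add_right,
      real_inner_self_eq_norm_sq]
    ring
  -- main inequalities
  have I1 : g xk1 ≤ g xk + ⟪g' xk, xk1 - xk⟫ + Lg / 2 * ‖xk1 - xk‖ ^ 2 :=
    lalm_grad_descent hg hLg xk xk1
  have I2 : g xk + ⟪g' xk, x - xk⟫ ≤ g x := lalm_grad_convex_le hgconv hg xk x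
  have I3 : ∀ j : Fin m, psi β (f j xk1) (zk j) ≤ psi β (f j xk) (zk j)
      + max (β * f j xk + zk j) 0 * ⟪f' j xk, xk1 - xk⟫
      + (β * (B j) ^ 2 + L j * max (β * f j xk + zk j) 0) / 2 * ‖xk1 - xk‖ ^ 2 := by
    intro j
    have hd := lalm_psi_descent hβ (f j xk) (f j xk1) (zk j)
    have hgd := lalm_grad_descent (hf j) (hLf j) xk xk1
    have hlip := lalm_grad_lip (hf j) (hBf j) xk xk1
    have hw : (0:ℝ) ≤ max (β * f j xk + zk j) 0 := le_max_right _ _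
    have hsq : (f j xk1 - f j xk) ^ 2 ≤ (B j) ^ 2 * ‖xk1 - xk‖ ^ 2 := by
      nlinarith [abs_nonneg (f j xk1 - f j xk), sq_abs (f j xk1 - f j xk),
        norm_nonneg (xk1 - xk), hlip, le_trans (norm_nonneg (f' j xk)) (hBf j xk)]
    have hmul : max (β * f j xk + zk j) 0 * (f j xk1 - f j xk)
        ≤ max (β * f j xk + zk j) 0 * (⟪f' j xk, xk1 - xk⟫ + L j / 2 * ‖xk1 - xk‖ ^ 2) :=
      mul_le_mul_of_nonneg_left (by linarith) hw
    have hβsq : β / 2 * (f j xk1 - f j xk) ^ 2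
        ≤ β / 2 * ((B j) ^ 2 * ‖xk1 - xk‖ ^ 2) :=
      mul_le_mul_of_nonneg_left hsq (by linarith)
    linarith [hd, hmul, hβsq]
  have I4 : ∀ j : Fin m, psi β (f j xk) (zk j)
      + max (β * f j xk + zk j) 0 * ⟪f' j xk, x - xk⟫ ≤ 0 := by
    intro j
    have hcv := lalm_grad_convex_le (hfconv j) (hf j) xk x
    have hpc := lalm_psi_conv hβ (f j xk) (f j x) (zk j)
    have hnp := lalm_psi_nonpos hβ (hfx j) (hzk j)
    have hw : (0:ℝ) ≤ max (β * f j xk + zk j) 0 := le_max_right _ _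
    have hmul : max (β * f j xk + zk j) 0 * ⟪f' j xk, x - xk⟫
        ≤ max (β * f j xk + zk j) 0 * (f j x - f j xk) :=
      mul_le_mul_of_nonneg_left (by linarith) hw
    linarith
  have S3 : ∑ j, psi β (f j xk1) (zk j) ≤ (∑ j, psi β (f j xk) (zk j))
      + (∑ j, max (β * f j xk + zk j) 0 * ⟪f' j xk, xk1 - xk⟫)
      + (∑ j, (β * (B j) ^ 2 + L j * max (β * f j xk + zk j) 0)) / 2 * ‖xk1 - xk‖ ^ 2 := by
    rw [Finset.sum_div, Finset.sum_mul, ← Finset.sum_add_distrib, ← Finset.sum_add_distrib]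
    exact Finset.sum_le_sum fun j _ => I3 j
  have S4 : (∑ j, psi β (f j xk) (zk j))
      + (∑ j, max (β * f j xk + zk j) 0 * ⟪f' j xk, x - xk⟫) ≤ 0 := by
    rw [← Finset.sum_add_distrib]
    exact Finset.sum_nonpos fun j _ => I4 j
  have I5 := lalm_prox_opt hhconv (le_of_lt hηk) hxmin x
  -- the key primal bound
  have MA : g xk1 + h xk1 + ⟪yk, A xk1 - b⟫ + β / 2 * ‖A xk1 - b‖ ^ 2
      + (∑ j, psi β (f j xk1) (zk j)) + β / 2 * ‖A xk - b‖ ^ 2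
      + ηk / 2 * ‖xk1 - x‖ ^ 2
      + 1 / 2 * ((ηk - Lg - ∑ j, (β * (B j) ^ 2 + L j * max (β * f j xk + zk j) 0))
          * ‖xk1 - xk‖ ^ 2 - β * ‖A (xk1 - xk)‖ ^ 2)
      ≤ g x + h x + ηk / 2 * ‖xk - x‖ ^ 2 := by
    have I5' : h xk1 + ⟪gradFx β f g' f' A b xk yk zk, xk1⟫
        + ηk * ⟪xk1 - xk, xk1 - x⟫
        ≤ h x + ⟪gradFx β f g' f' A b xk yk zk, x⟫ := I5
    linarith [I1, I2, S3, S4, I5', G1, G2, I6a, I6b, E1, E2, E3, E4]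
  -- the dual y bound (an identity)
  have E5 : 1 / (2 * ρy) * ‖yk1 - y‖ ^ 2 = 1 / (2 * ρy) * ‖yk - y‖ ^ 2
      + ⟪yk - y, A xk1 - b⟫ + ρy / 2 * ‖A xk1 - b‖ ^ 2 := by
    have hv : yk1 - y = (yk - y) + ρy • (A xk1 - b) := by rw [hy]; abel
    rw [hv, norm_add_sq_real, real_inner_smul_right, norm_smul, Real.norm_eq_abs,
      mul_pow, sq_abs]
    field_simp
  have E6 : ⟪y, A xk1 - b⟫ = ⟪yk, A xk1 - b⟫ - ⟪yk - y, A xk1 - b⟫ := by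
    rw [inner_sub_left]; ring
  -- the dual z bound
  have SZ : (∑ j, z j * f j xk1) + 1 / (2 * ρz) * ‖zk1 - z‖ ^ 2
      + (β - ρz) / (2 * ρz ^ 2) * ‖zk1 - zk‖ ^ 2
      ≤ (∑ j, psi β (f j xk1) (zk j)) + 1 / (2 * ρz) * ‖zk - z‖ ^ 2 := by
    have h1 : ‖zk1 - z‖ ^ 2
        = ∑ j, (zk j + ρz * max (-(zk j) / β) (f j xk1) - z j) ^ 2 := by
      rw [lalm_enorm_sq]
      exact Finset.sum_congr rfl fun j _ => by simp [hz j]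
    have h2 : ‖zk - z‖ ^ 2 = ∑ j, (zk j - z j) ^ 2 := by
      rw [lalm_enorm_sq]
      exact Finset.sum_congr rfl fun j _ => by simp
    have h3 : ‖zk1 - zk‖ ^ 2 = ∑ j, (ρz * max (-(zk j) / β) (f j xk1)) ^ 2 := by
      rw [lalm_enorm_sq]
      exact Finset.sum_congr rfl fun j _ => by simp [hz j]
    have h4 : (∑ j, psi β (f j xk1) (zk j))
        = ∑ j, (zk j * max (-(zk j) / β) (f j xk1)
            + β / 2 * (max (-(zk j) / β) (f j xk1)) ^ 2) := by
      exact Finset.sum_congr rfl fun j _ => lalm_psi_smax hβ _ _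
    rw [h1, h2, h3, h4, Finset.mul_sum, Finset.mul_sum, Finset.mul_sum,
      ← Finset.sum_add_distrib, ← Finset.sum_add_distrib, ← Finset.sum_add_distrib]
    refine Finset.sum_le_sum fun j _ => ?_
    have := lalm_zcomp (β := β) (ρz := ρz) (v := zk j) (z := z j) (u := f j xk1)
      hβ hρz (hzk j) (hz0 j)
    linarith
  linarith [MA, E5, E6, SZ]

end
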